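/- Subject reduction for System F (polymorphic λ-calculus): if Γ ⊢ p : τ and p β-reduces to p' (either by term β-reduction (λx:σ. q) v ↝ q[x := v] or type β-reduction (ΛX. q) τ' ↝ q[X := τ']), then Γ ⊢ p' : τ. -/

import Mathlib

/-- System F types (de Bruijn type variables). -/
inductive Ty : Type
  | var : ℕ → Ty
  | arrow : Ty → Ty → Ty
  | all : Ty → Ty

/-- Shift free type variables ≥ d by one. -/
def Ty.lift (d : ℕ) : Ty → Ty
  | .var n => if n < d then .var n else .var (n + 1)
  | .arrow a b => .arrow (a.lift d) (b.lift d)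
  | .all t => .all (t.lift (d + 1))

/-- Type substitution `τ[X_k := u]`. -/
def Ty.subst : Ty → ℕ → Ty → Ty
  | .var n, k, u => if n < k then .var n else if n = k then u else .var (n - 1)
  | .arrow a b, k, u => .arrow (a.subst k u) (b.subst k u)
  | .all t, k, u => .all (t.subst (k + 1) (u.lift 0))

/-- System F terms (de Bruijn term and type variables). -/
inductive Tm : Type
  | var : ℕ → Tm
  | lam : Ty → Tm → Tm
  | app : Tm → Tm → Tm
  | tlam : Tm → Tm
  | tapp : Tm → Ty → Tm

/-- Shift free term variables ≥ d by one. -/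
def Tm.lift (d : ℕ) : Tm → Tm
  | .var n => if n < d then .var n else .var (n + 1)
  | .lam σ t => .lam σ (t.lift (d + 1))
  | .app t u => .app (t.lift d) (u.lift d)
  | .tlam t => .tlam (t.lift d)
  | .tapp t τ => .tapp (t.lift d) τ

/-- Shift free type variables ≥ d by one inside a term. -/
def Tm.tyLift (d : ℕ) : Tm → Tm
  | .var n => .var n
  | .lam σ t => .lam (σ.lift d) (t.tyLift d)
  | .app t u => .app (t.tyLift d) (u.tyLift d)
  | .tlam t => .tlam (t.tyLift (d + 1))
  | .tapp t τ => .tapp (t.tyLift d) (τ.lift d)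

/-- Term substitution `p[x_k := u]`. -/
def Tm.subst : Tm → ℕ → Tm → Tm
  | .var n, k, u => if n < k then .var n else if n = k then u else .var (n - 1)
  | .lam σ t, k, u => .lam σ (t.subst (k + 1) (u.lift 0))
  | .app t t', k, u => .app (t.subst k u) (t'.subst k u)
  | .tlam t, k, u => .tlam (t.subst k (u.tyLift 0))
  | .tapp t τ, k, u => .tapp (t.subst k u) τ

/-- Type substitution in a term, `p[X_k := τ']`. -/
def Tm.tySubst : Tm → ℕ → Ty → Tm
  | .var n, _, _ => .var n
  | .lam σ t, k, τ' => .lam (σ.subst k τ') (t.tySubst k τ')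
  | .app t u, k, τ' => .app (t.tySubst k τ') (u.tySubst k τ')
  | .tlam t, k, τ' => .tlam (t.tySubst (k + 1) (τ'.lift 0))
  | .tapp t τ, k, τ' => .tapp (t.tySubst k τ') (τ.subst k τ')

/-- Typing judgment `Γ ⊢ p : τ` for System F. -/
inductive Typing : List Ty → Tm → Ty → Prop
  | var {Γ n τ} : Γ[n]? = some τ → Typing Γ (.var n) τ
  | lam {Γ σ t τ} : Typing (σ :: Γ) t τ → Typing Γ (.lam σ t) (.arrow σ τ)
  | app {Γ t u σ τ} : Typing Γ t (.arrow σ τ) → Typing Γ u σ → Typing Γ (.app t u) τ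
  | tlam {Γ t τ} : Typing (Γ.map (Ty.lift 0)) t τ → Typing Γ (.tlam t) (.all τ)
  | tapp {Γ t τ τ'} : Typing Γ t (.all τ) → Typing Γ (.tapp t τ') (τ.subst 0 τ')

/-- One-step β-reduction: term β, type β, and closure under any context. -/
inductive Step : Tm → Tm → Prop
  | beta (σ : Ty) (t u : Tm) : Step (.app (.lam σ t) u) (t.subst 0 u)
  | tbeta (t : Tm) (τ' : Ty) : Step (.tapp (.tlam t) τ') (t.tySubst 0 τ')
  | lam {σ t t'} : Step t t' → Step (.lam σ t) (.lam σ t')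
  | appL {t t' u} : Step t t' → Step (.app t u) (.app t' u)
  | appR {t u u'} : Step u u' → Step (.app t u) (.app t u')
  | tlam {t t'} : Step t t' → Step (.tlam t) (.tlam t')
  | tapp {t t' τ} : Step t t' → Step (.tapp t τ) (.tapp t' τ)


theorem Ty.lift_lift (a : Ty) : ∀ i j, i ≤ j → (a.lift j).lift i = (a.lift i).lift (j+1) := by
  induction a with
  | var n =>
      intro i j h; simp only [Ty.lift]; split_ifs <;> simp [Ty.lift] <;> split_ifs <;>
      first | rfl | omega
  | arrow a b iha ihb =>
      intro i j h; simp [Ty.lift, iha _ _ h, ihb _ _ h]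
  | all t ih =>
      intro i j h; simp [Ty.lift, ih (i+1) (j+1) (by omega)]

theorem Ty.lift_subst (a : Ty) : ∀ u i k, i ≤ k →
    (a.lift i).subst (k+1) (u.lift i) = (a.subst k u).lift i := by
  induction a with
  | var n =>
      intro u i k h; simp only [Ty.lift, Ty.subst]; split_ifs <;>
      simp only [Ty.lift, Ty.subst] <;> split_ifs <;> first | rfl | omega | (congr 1; omega)
  | arrow a b iha ihb =>
      intro u i k h; simp [Ty.lift, Ty.subst, iha _ _ _ h, ihb _ _ _ h]
  | all t ih =>
      intro u i k h
      simp only [Ty.lift, Ty.subst]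
      rw [Ty.lift_lift u 0 i (by omega), ih (u.lift 0) (i+1) (k+1) (by omega)]

theorem Ty.subst_lift_ge (a : Ty) : ∀ u k d, k ≤ d →
    (a.subst k u).lift d = (a.lift (d+1)).subst k (u.lift d) := by
  induction a with
  | var n =>
      intro u k d h; simp only [Ty.lift, Ty.subst]; split_ifs <;>
      simp only [Ty.lift, Ty.subst] <;> split_ifs <;> first | rfl | omega |
        (congr 1; omega)
  | arrow a b iha ihb =>
      intro u k d h; simp [Ty.lift, Ty.subst, iha _ _ _ h, ihb _ _ _ h]
  | all t ih =>
      intro u k d h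
      simp only [Ty.lift, Ty.subst]
      rw [ih (u.lift 0) (k+1) (d+1) (by omega), Ty.lift_lift u 0 d (by omega)]

theorem Ty.subst_lift (a : Ty) : ∀ u k, (a.lift k).subst k u = a := by
  induction a with
  | var n =>
      intro u k; simp only [Ty.lift]; split_ifs <;> simp [Ty.subst] <;> split_ifs <;>
      first | rfl | omega | (congr 1; omega)
  | arrow a b iha ihb =>
      intro u k; simp [Ty.lift, Ty.subst, iha, ihb]
  | all t ih =>
      intro u k; simp [Ty.lift, Ty.subst, ih]

theorem Ty.subst_subst (a : Ty) : ∀ u v j k, j ≤ k →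
    (a.subst j v).subst k u = (a.subst (k+1) (u.lift j)).subst j (v.subst k u) := by
  induction a with
  | var n =>
      intro u v j k h
      simp only [Ty.subst]
      rcases Nat.lt_trichotomy n j with h1 | h1 | h1
      · simp only [if_pos h1, if_pos (by omega : n < k+1), Ty.subst, if_pos h1,
          if_pos (by omega : n < k)]
      · subst h1; simp only [lt_irrefl, if_neg, if_pos rfl, if_pos (by omega : n < k+1),
          Ty.subst, lt_irrefl, if_neg]; simp
      · rcases Nat.lt_trichotomy n (k+1) with h2 | h2 | h2
        · simp only [if_neg (by omega : ¬ n < j), if_neg (by omega : n ≠ j), if_pos h2,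
            Ty.subst, if_pos (by omega : n - 1 < k), if_neg (by omega : ¬ n < j),
            if_neg (by omega : n ≠ j)]
        · subst h2; simp only [if_neg (by omega : ¬ k+1 < j), if_neg (by omega : k+1 ≠ j),
            lt_irrefl, if_neg, if_pos rfl, Ty.subst, if_neg (by omega : ¬ k+1-1 < k)]
          simp only [Nat.add_sub_cancel, lt_irrefl, if_neg, if_pos rfl]
          exact (Ty.subst_lift u _ j).symm
        · simp only [if_neg (by omega : ¬ n < j), if_neg (by omega : n ≠ j),
            if_neg (by omega : ¬ n < k+1), if_neg (by omega : n ≠ k+1), Ty.subst,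
            if_neg (by omega : ¬ n - 1 < k), if_neg (by omega : n - 1 ≠ k),
            if_neg (by omega : ¬ n - 1 < j), if_neg (by omega : n - 1 ≠ j)]
  | arrow a b iha ihb =>
      intro u v j k h; simp [Ty.subst, iha _ _ _ _ h, ihb _ _ _ _ h]
  | all t ih =>
      intro u v j k h
      simp only [Ty.subst]
      rw [ih (u.lift 0) (v.lift 0) (j+1) (k+1) (by omega), Ty.lift_lift u 0 j (by omega),
        Ty.lift_subst v u 0 k (by omega)]


theorem Typing.weaken {t τ} {Γ : List Ty} (h : Typing Γ t τ) :
    ∀ Γ₁ Γ₂ (σ : Ty), Γ = Γ₁ ++ Γ₂ → Typing (Γ₁ ++ σ :: Γ₂) (t.lift Γ₁.length) τ := by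
  induction h with
  | @var Γ n τ hg =>
      intro Γ₁ Γ₂ σ hΓ
      subst hΓ
      simp only [Tm.lift]
      split_ifs with hn
      · exact Typing.var (by rw [List.getElem?_append_left hn]; rwa [List.getElem?_append_left hn] at hg)
      · refine Typing.var ?_
        rw [List.getElem?_append_right (by omega)]
        rw [show n + 1 - Γ₁.length = n - Γ₁.length + 1 from by omega, List.getElem?_cons_succ]
        rw [List.getElem?_append_right (by omega)] at hg
        exact hg
  | @lam Γ σ' t τ ht ih =>
      intro Γ₁ Γ₂ σ hΓ
      exact Typing.lam (ih (σ' :: Γ₁) Γ₂ σ (by simp [hΓ]))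
  | app ht hu iht ihu =>
      intro Γ₁ Γ₂ σ hΓ
      exact Typing.app (iht _ _ _ hΓ) (ihu _ _ _ hΓ)
  | @tlam Γ t τ ht ih =>
      intro Γ₁ Γ₂ σ hΓ
      refine Typing.tlam ?_
      have := ih (Γ₁.map (Ty.lift 0)) (Γ₂.map (Ty.lift 0)) (σ.lift 0) (by simp [hΓ])
      simpa using this
  | tapp ht ih =>
      intro Γ₁ Γ₂ σ hΓ
      exact Typing.tapp (ih _ _ _ hΓ)

theorem Typing.tyWeaken {t τ} {Γ : List Ty} (h : Typing Γ t τ) :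
    ∀ d, Typing (Γ.map (Ty.lift d)) (t.tyLift d) (τ.lift d) := by
  induction h with
  | @var Γ n τ hg =>
      intro d
      exact Typing.var (by rw [List.getElem?_map, hg]; rfl)
  | lam ht ih =>
      intro d
      exact Typing.lam (by simpa using ih d)
  | app ht hu iht ihu =>
      intro d
      exact Typing.app (iht d) (ihu d)
  | @tlam Γ t τ ht ih =>
      intro d
      refine Typing.tlam ?_
      have := ih (d + 1)
      simp only [List.map_map] at this ⊢
      have hmap : (Ty.lift (d+1)) ∘ (Ty.lift 0) = (Ty.lift 0) ∘ (Ty.lift d) := by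
        funext a; simp only [Function.comp_apply]; exact (Ty.lift_lift a 0 d (by omega)).symm
      rwa [hmap] at this
  | @tapp Γ t τ τ' ht ih =>
      intro d
      have := Typing.tapp (τ' := τ'.lift d) (ih d)
      rwa [← Ty.subst_lift_ge τ τ' 0 d (by omega)] at this

theorem Typing.substPres {t τ} {Γ : List Ty} (h : Typing Γ t τ) :
    ∀ Γ₁ Γ₂ (σ : Ty) (u : Tm), Γ = Γ₁ ++ σ :: Γ₂ → Typing (Γ₁ ++ Γ₂) u σ →
      Typing (Γ₁ ++ Γ₂) (t.subst Γ₁.length u) τ := by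
  induction h with
  | @var Γ n τ hg =>
      intro Γ₁ Γ₂ σ u hΓ hu
      subst hΓ
      simp only [Tm.subst]
      split_ifs with h1 h2
      · exact Typing.var (by rw [List.getElem?_append_left h1]; rwa [List.getElem?_append_left h1] at hg)
      · subst h2
        have : τ = σ := by
          rw [List.getElem?_append_right (le_refl _)] at hg
          simpa using hg.symm
        subst this; exact hu
      · refine Typing.var ?_
        rw [List.getElem?_append_right (by omega)]
        rwa [List.getElem?_append_right (by omega), show n - Γ₁.length = n - 1 - Γ₁.length + 1 by
          omega, List.getElem?_cons_succ] at hg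
  | @lam Γ σ' t τ ht ih =>
      intro Γ₁ Γ₂ σ u hΓ hu
      refine Typing.lam ?_
      have := ih (σ' :: Γ₁) Γ₂ σ (u.lift 0) (by simp [hΓ])
        (Typing.weaken hu [] (Γ₁ ++ Γ₂) σ' rfl)
      simpa using this
  | app ht hu iht ihu =>
      intro Γ₁ Γ₂ σ u hΓ h
      exact Typing.app (iht _ _ _ _ hΓ h) (ihu _ _ _ _ hΓ h)
  | @tlam Γ t τ ht ih =>
      intro Γ₁ Γ₂ σ u hΓ hu
      refine Typing.tlam ?_
      have := ih (Γ₁.map (Ty.lift 0)) (Γ₂.map (Ty.lift 0)) (σ.lift 0) (u.tyLift 0)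
        (by simp [hΓ]) (by simpa using Typing.tyWeaken hu 0)
      simpa using this
  | tapp ht ih =>
      intro Γ₁ Γ₂ σ u hΓ hu
      exact Typing.tapp (ih _ _ _ _ hΓ hu)

theorem Typing.tySubstPres {t τ} {Γ : List Ty} (h : Typing Γ t τ) :
    ∀ k (u : Ty), Typing (Γ.map (fun a => a.subst k u)) (t.tySubst k u) (τ.subst k u) := by
  induction h with
  | @var Γ n τ hg =>
      intro k u
      exact Typing.var (by rw [List.getElem?_map, hg]; rfl)
  | lam ht ih =>
      intro k u
      exact Typing.lam (by simpa using ih k u)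
  | app ht hu iht ihu =>
      intro k u
      exact Typing.app (iht k u) (ihu k u)
  | @tlam Γ t τ ht ih =>
      intro k u
      refine Typing.tlam ?_
      have := ih (k+1) (u.lift 0)
      simp only [List.map_map] at this ⊢
      have hmap : (fun a => Ty.subst a (k+1) (u.lift 0)) ∘ (Ty.lift 0)
          = (Ty.lift 0) ∘ (fun a => Ty.subst a k u) := by
        funext a; simp only [Function.comp_apply]; exact Ty.lift_subst a u 0 k (by omega)
      rwa [hmap] at this
  | @tapp Γ t τ τ' ht ih =>
      intro k u
      have := Typing.tapp (τ' := τ'.subst k u) (ih k u)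
      rwa [← Ty.subst_subst τ u τ' 0 k (by omega)] at this

/-- Subject reduction for System F: typing is preserved by one-step β-reduction
(term-level or type-level). -/
theorem subject_reduction {Γ : List Ty} {p p' : Tm} {τ : Ty}
    (h : Typing Γ p τ) (hs : Step p p') : Typing Γ p' τ := by
  induction hs generalizing Γ τ with
  | beta σ t u =>
      cases h with
      | app ht hu =>
        cases ht with
        | lam ht' => exact Typing.substPres ht' [] Γ _ u rfl hu
  | tbeta t τ' =>
      cases h with
      | tapp ht =>
        cases ht with
        | tlam ht' =>
          have := Typing.tySubstPres ht' 0 τ'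
          simp only [List.map_map] at this
          have hmap : (fun a => Ty.subst a 0 τ') ∘ (Ty.lift 0) = id := by
            funext a; simp only [Function.comp_apply, id_eq]; exact Ty.subst_lift a τ' 0
          rwa [hmap, List.map_id] at this
  | lam hs ih =>
      cases h with
      | lam ht => exact Typing.lam (ih ht)
  | appL hs ih =>
      cases h with
      | app ht hu => exact Typing.app (ih ht) hu
  | appR hs ih =>
      cases h with
      | app ht hu => exact Typing.app ht (ih hu)
  | tlam hs ih =>
      cases h with
      | tlam ht => exact Typing.tlam (ih ht)
  | tapp hs ih =>
      cases h with
      | tapp ht => exact Typing.tapp (ih ht)
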